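/- Let g : ℝ → ℝ be continuous with g(t) ≥ 0 for t ≥ 0, set G(t) := ∫₀ᵗ g(τ) dτ, and let 1 < g⁻ ≤ g⁺ be real constants satisfying g⁻·G(t) ≤ t·g(t) ≤ g⁺·G(t) for all t > 0. Then for all τ > 0 and all t > 0: min{τ^{g⁻}, τ^{g⁺}}·G(t) ≤ G(τ·t) ≤ max{τ^{g⁻}, τ^{g⁺}}·G(t). -/

import Mathlib

lemma aux_mono (g G : ℝ → ℝ) (hG' : ∀ s : ℝ, HasDerivAt G (g s) s) (p : ℝ)
    (h : ∀ s : ℝ, 0 < s → p * G s ≤ s * g s) :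
    MonotoneOn (fun s => G s * s ^ (-p)) (Set.Ioi (0 : ℝ)) := by
  have hderiv : ∀ s ∈ Set.Ioi (0:ℝ), HasDerivAt (fun s => G s * s ^ (-p))
      (s ^ (-p - 1) * (s * g s - p * G s)) s := by
    intro s hs
    have hs0 : (0:ℝ) < s := hs
    have h1 : HasDerivAt (fun x : ℝ => x ^ (-p)) (-p * s ^ (-p - 1)) s :=
      Real.hasDerivAt_rpow_const (Or.inl hs0.ne')
    have : HasDerivAt (fun s => G s * s ^ (-p)) _ s := (hG' s).mul h1
    convert this using 1
    have : s ^ (-p) = s * s ^ (-p - 1) := by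
      rw [show s * s ^ (-p-1) = s ^ (1 + (-p-1)) by rw [Real.rpow_add hs0, Real.rpow_one]]
      norm_num
    rw [this]; ring
  apply monotoneOn_of_deriv_nonneg (convex_Ioi 0)
  · exact ContinuousOn.mul (fun s hs => ((hG' s).continuousAt).continuousWithinAt)
      (fun s hs => (Real.continuousAt_rpow_const s (-p) (Or.inl (ne_of_gt hs))).continuousWithinAt)
  · intro s hs
    rw [interior_Ioi] at hs
    exact (hderiv s hs).differentiableAt.differentiableWithinAt
  · intro s hs
    rw [interior_Ioi] at hs
    rw [(hderiv s hs).deriv]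
    have : (0:ℝ) < s ^ (-p - 1) := Real.rpow_pos_of_pos hs _
    nlinarith [h s hs]



/-- Scaling estimate for an N-function `G` with indices `1 < g⁻ ≤ g⁺`:
`min (τ^g⁻) (τ^g⁺) * G t ≤ G (τ * t) ≤ max (τ^g⁻) (τ^g⁺) * G t` for all `τ, t > 0`. -/
theorem Nfunction_scaling_estimate
    (g : ℝ → ℝ) (hg : Continuous g) (hgnn : ∀ t : ℝ, 0 ≤ t → 0 ≤ g t)
    (G : ℝ → ℝ) (hG : ∀ t : ℝ, G t = ∫ τ in (0 : ℝ)..t, g τ)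
    (gm gp : ℝ) (hgm : 1 < gm) (hgmp : gm ≤ gp)
    (hineq : ∀ t : ℝ, 0 < t → gm * G t ≤ t * g t ∧ t * g t ≤ gp * G t) :
    ∀ τ t : ℝ, 0 < τ → 0 < t →
      min (τ ^ gm) (τ ^ gp) * G t ≤ G (τ * t) ∧
      G (τ * t) ≤ max (τ ^ gm) (τ ^ gp) * G t := by
  have hGfun : G = fun u => ∫ τ in (0:ℝ)..u, g τ := funext hG
  have hG' : ∀ s : ℝ, HasDerivAt G (g s) s := by
    intro s; rw [hGfun]; exact (hg.integral_hasStrictDerivAt 0 s).hasDerivAt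
  have hmono := aux_mono g G hG' gm (fun s hs => (hineq s hs).1)
  have hanti : MonotoneOn (fun s => (-G s) * s ^ (-gp)) (Set.Ioi (0:ℝ)) :=
    aux_mono (fun s => -g s) (fun s => -G s) (fun s => (hG' s).neg) gp
      (fun s hs => by have := (hineq s hs).2; simp only [mul_neg]; linarith)
  intro τ t hτ ht
  have htt : 0 < τ * t := mul_pos hτ ht
  have ha : ∀ p : ℝ, t ^ (-p) * (τ*t) ^ p = τ ^ p := by
    intro p
    rw [Real.mul_rpow hτ.le ht.le,
      show t^(-p) * (τ^p * t^p) = τ^p * (t^(-p) * t^p) by ring, ← Real.rpow_add ht]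
    simp
  have hb : ∀ p : ℝ, (τ*t) ^ (-p) * (τ*t) ^ p = 1 := by
    intro p; rw [← Real.rpow_add htt]; simp
  have conv : ∀ p X Y : ℝ, X * t ^ (-p) ≤ Y * (τ*t) ^ (-p) → τ ^ p * X ≤ Y := by
    intro p X Y h
    have pos : (0:ℝ) < (τ*t) ^ p := Real.rpow_pos_of_pos htt p
    have h2 := mul_le_mul_of_nonneg_right h pos.le
    rw [mul_assoc, mul_assoc, ha p, hb p, mul_one] at h2
    linarith
  have conv2 : ∀ p X Y : ℝ, X * (τ*t) ^ (-p) ≤ Y * t ^ (-p) → X ≤ τ ^ p * Y := by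
    intro p X Y h
    have pos : (0:ℝ) < (τ*t) ^ p := Real.rpow_pos_of_pos htt p
    have h2 := mul_le_mul_of_nonneg_right h pos.le
    rw [mul_assoc, mul_assoc, hb p, ha p, mul_one] at h2
    linarith
  rcases le_or_gt 1 τ with h1 | h1
  · -- τ ≥ 1 : min = τ^gm, max = τ^gp
    have hle : τ ^ gm ≤ τ ^ gp := Real.rpow_le_rpow_of_exponent_le h1 hgmp
    have hts : t ≤ τ * t := le_mul_of_one_le_left ht.le h1
    have e1 := conv gm (G t) (G (τ*t)) (hmono (Set.mem_Ioi.2 ht) (Set.mem_Ioi.2 htt) hts)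
    have e2 := conv gp (-G t) (-G (τ*t)) (hanti (Set.mem_Ioi.2 ht) (Set.mem_Ioi.2 htt) hts)
    rw [min_eq_left hle, max_eq_right hle]
    constructor
    · exact e1
    · nlinarith
  · -- τ ≤ 1 : min = τ^gp, max = τ^gm
    have hle : τ ^ gp ≤ τ ^ gm := Real.rpow_le_rpow_of_exponent_ge hτ h1.le hgmp
    have hts : τ * t ≤ t := mul_le_of_le_one_left ht.le h1.le
    have e1 := conv2 gm (G (τ*t)) (G t) (hmono (Set.mem_Ioi.2 htt) (Set.mem_Ioi.2 ht) hts)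
    have e2 := conv2 gp (-G (τ*t)) (-G t) (hanti (Set.mem_Ioi.2 htt) (Set.mem_Ioi.2 ht) hts)
    rw [min_eq_right hle, max_eq_left hle]
    constructor
    · nlinarith
    · exact e1
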